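/- arXiv:2012.08647 — 3 statements merged into one kernel-verified Lean document; each statement's English description precedes it below -/
import Mathlib

section
/- For any positive integer q and real c with 0 < c < 1, the sum over even indices k (0 ≤ k ≤ 2q, k even) of Γ(q+1)·c^{k/2} / (Γ(k/2+1)·Γ(q−k/2+1)) is greater than or equal to the sum over odd indices k (1 ≤ k ≤ 2q−1, k odd) of the same expression. -/
open Real Finset



/-- Γ(n + 1/2) -/
noncomputable def hg (n : ℕ) : ℝ := Real.Gamma ((n : ℝ) + 1/2)

lemma hg_pos (n : ℕ) : 0 < hg n := Real.Gamma_pos_of_pos (by positivity)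

lemma hg_zero : hg 0 = Real.sqrt π := by
  show Real.Gamma ((0:ℕ) + 1/2) = _
  norm_num [Real.Gamma_one_half_eq]

lemma hg_succ (n : ℕ) : hg (n+1) = ((n:ℝ) + 1/2) * hg n := by
  have h : (((n+1 : ℕ)) : ℝ) + 1/2 = ((n:ℝ) + 1/2) + 1 := by push_cast; ring
  rw [hg, h, Real.Gamma_add_one (by positivity)]; rfl

/-- Wallis-type integral ∫₀¹ (1-v²)^m dv -/
noncomputable def W (m : ℕ) : ℝ := ∫ v in (0:ℝ)..1, (1 - v^2)^m

lemma W_zero : W 0 = 1 := by simp [W]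

lemma W_succ (m : ℕ) : (2*(m:ℝ)+3) * W (m+1) = (2*(m:ℝ)+2) * W m := by
  have hd : ∀ v ∈ Set.uIcc (0:ℝ) 1, HasDerivAt (fun v : ℝ => v * (1 - v^2)^(m+1))
      ((2*(m:ℝ)+3) * (1 - v^2)^(m+1) - (2*(m:ℝ)+2) * (1 - v^2)^m) v := by
    intro v _
    have h2 : HasDerivAt (fun v : ℝ => 1 - v^2) (-(2*v)) v := by
      simpa using ((hasDerivAt_pow 2 v).const_sub 1)
    have h1 : HasDerivAt (fun v : ℝ => v * (1 - v^2)^(m+1))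
        (1 * (1 - v^2)^(m+1) + v * ((m+1 : ℕ) * (1 - v^2)^m * (-(2*v)))) v :=
      (hasDerivAt_id v).mul (h2.pow (m+1))
    convert h1 using 1
    have hsq : (1 - v^2)^(m+1) = (1 - v^2) * (1 - v^2)^m := by ring
    rw [hsq]; push_cast; ring
  have hint : IntervalIntegrable
      (fun v : ℝ => (2*(m:ℝ)+3) * (1 - v^2)^(m+1) - (2*(m:ℝ)+2) * (1 - v^2)^m)
      MeasureTheory.volume 0 1 := (Continuous.intervalIntegrable (by continuity) 0 1)
  have := intervalIntegral.integral_eq_sub_of_hasDerivAt hd hint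
  simp only [one_pow, mul_one] at this
  rw [intervalIntegral.integral_sub ((Continuous.intervalIntegrable (by continuity) 0 1))
      ((Continuous.intervalIntegrable (by continuity) 0 1)),
    intervalIntegral.integral_const_mul, intervalIntegral.integral_const_mul] at this
  norm_num at this
  show (2*(m:ℝ)+3) * (∫ v in (0:ℝ)..1, (1 - v^2)^(m+1)) = (2*(m:ℝ)+2) * (∫ v in (0:ℝ)..1, (1 - v^2)^m)
  linarith [this]

lemma W_nonneg (m : ℕ) : 0 ≤ W m := by
  apply intervalIntegral.integral_nonneg (by norm_num)
  intro v hv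
  have h1 : v^2 ≤ 1 := by nlinarith [hv.1, hv.2]
  have : (0:ℝ) ≤ 1 - v^2 := by linarith
  positivity


/-- the half-binomial coefficient ratio β_{m+1} = Γ(m+1)/(√π Γ(m+3/2)) -/
noncomputable def bb (m : ℕ) : ℝ := Real.Gamma ((m:ℝ)+1) / (Real.sqrt π * hg (m+1))

lemma bb_nonneg (m : ℕ) : 0 ≤ bb m := by
  have := hg_pos (m+1)
  have h1 : (0:ℝ) < Real.Gamma ((m:ℝ)+1) := Real.Gamma_pos_of_pos (by positivity)
  have h2 : (0:ℝ) < Real.sqrt π := Real.sqrt_pos.mpr Real.pi_pos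
  have h3 : (0:ℝ) < Real.sqrt π * hg (m+1) := by positivity
  exact le_of_lt (div_pos h1 h3)

lemma bb_eq_W (m : ℕ) : bb m = 2/π * W m := by
  induction m with
  | zero =>
    have h1 : hg 1 = (1/2) * Real.sqrt π := by
      rw [hg_succ 0, hg_zero]; norm_num
    have hπ : Real.sqrt π * Real.sqrt π = π := Real.mul_self_sqrt Real.pi_pos.le
    show Real.Gamma ((0:ℕ) + 1) / _ = _
    rw [W_zero, h1]
    push_cast
    rw [zero_add, Real.Gamma_one]
    rw [show Real.sqrt π * (1/2 * Real.sqrt π) = π/2 by rw [show Real.sqrt π * (1/2 * Real.sqrt π) = (Real.sqrt π * Real.sqrt π)/2 by ring, hπ]]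
    field_simp
  | succ m ih =>
    have hG : Real.Gamma ((m+1:ℕ):ℝ) ≠ 0 := ne_of_gt (Real.Gamma_pos_of_pos (by positivity))
    have key : Real.Gamma (((m+1:ℕ)):ℝ) = Real.Gamma ((m:ℝ)+1) := by push_cast; ring_nf
    have hGsucc : Real.Gamma (((m+1:ℕ):ℝ)+1) = ((m:ℝ)+1) * Real.Gamma ((m:ℝ)+1) := by
      have : ((m+1:ℕ):ℝ) + 1 = ((m:ℝ)+1) + 1 := by push_cast; ring
      rw [this, Real.Gamma_add_one (by positivity)]
    have hW : W (m+1) = (2*(m:ℝ)+2)/(2*(m:ℝ)+3) * W m := by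
      have h3 : (2*(m:ℝ)+3) ≠ 0 := by positivity
      field_simp
      linarith [W_succ m]
    rw [bb, hGsucc, hg_succ (m+1), hW,
      show (2:ℝ)/π * ((2*(m:ℝ)+2)/(2*(m:ℝ)+3) * W m) = (2*(m:ℝ)+2)/(2*(m:ℝ)+3) * (2/π * W m) by ring,
      ← ih, bb]
    have hπ : (0:ℝ) < Real.sqrt π := Real.sqrt_pos.mpr Real.pi_pos
    have h1 := hg_pos (m+1)
    have h2 : ((m+1:ℕ):ℝ) + 1/2 ≠ 0 := by positivity
    field_simp
    push_cast
    ring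


/-- odd-index sum -/
noncomputable def O (c : ℝ) (q : ℕ) : ℝ :=
  ∑ j ∈ Finset.range q, Real.Gamma ((q:ℝ)+1) * (Real.sqrt c * c^j) / (hg (j+1) * hg (q - j))

/-- real Pascal rule for half-binomials -/
lemma pascal (q j : ℕ) (hj : j ≤ q) :
    Real.Gamma ((q:ℝ)+2) / (hg (j+1) * hg (q+1-j)) =
      Real.Gamma ((q:ℝ)+1) / (hg (j+1) * hg (q-j)) +
      Real.Gamma ((q:ℝ)+1) / (hg j * hg (q+1-j)) := by
  have hsub : q + 1 - j = (q - j) + 1 := by omega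
  have hcast : ((q - j : ℕ) : ℝ) = (q:ℝ) - (j:ℝ) := by
    push_cast [Nat.cast_sub hj]; ring
  have hG2 : Real.Gamma ((q:ℝ)+2) = ((q:ℝ)+1) * Real.Gamma ((q:ℝ)+1) := by
    rw [show (q:ℝ)+2 = ((q:ℝ)+1)+1 by ring, Real.Gamma_add_one (by positivity)]
  rw [hsub, hG2, hg_succ (q-j), hg_succ j, hcast]
  have h1 := (hg_pos j).ne'
  have h2 := (hg_pos (q-j)).ne'
  have hjq : (j:ℝ) ≤ (q:ℝ) := by exact_mod_cast hj
  have h3 : (j:ℝ) + 1/2 ≠ 0 := by positivity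
  have h4 : (q:ℝ) - (j:ℝ) + 1/2 ≠ 0 := ne_of_gt (by linarith)
  have hd1 : ((j:ℝ)+1/2) * hg j * hg (q-j) ≠ 0 := by
    exact mul_ne_zero (mul_ne_zero h3 h1) h2
  have hd2 : hg j * (((q:ℝ)-(j:ℝ)+1/2) * hg (q-j)) ≠ 0 := by
    exact mul_ne_zero h1 (mul_ne_zero h4 h2)
  have hd3 : ((j:ℝ)+1/2) * hg j * (((q:ℝ)-(j:ℝ)+1/2) * hg (q-j)) ≠ 0 := by
    exact mul_ne_zero (mul_ne_zero h3 h1) (mul_ne_zero h4 h2)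
  rw [div_add_div _ _ hd1 hd2, div_eq_div_iff hd3 (mul_ne_zero hd1 hd2)]
  ring

lemma O_succ (c : ℝ) (q : ℕ) : O c (q+1) = (1+c) * O c q + bb q * (Real.sqrt c * (1 + c^q)) := by
  have hGq : Real.Gamma (((q+1:ℕ):ℝ)+1) = Real.Gamma ((q:ℝ)+2) := by
    rw [show ((q+1:ℕ):ℝ)+1 = (q:ℝ)+2 by push_cast; ring]
  have step1 : O c (q+1) = ∑ j ∈ Finset.range (q+1),
      (Real.Gamma ((q:ℝ)+1) * (Real.sqrt c * c^j) / (hg (j+1) * hg (q-j)) +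
       Real.Gamma ((q:ℝ)+1) * (Real.sqrt c * c^j) / (hg j * hg (q+1-j))) := by
    rw [O]
    apply Finset.sum_congr rfl
    intro j hj
    have hj' : j ≤ q := by simpa [Nat.lt_succ_iff] using Finset.mem_range.mp hj
    have hp := pascal q j hj'
    calc Real.Gamma (((q+1:ℕ):ℝ)+1) * (Real.sqrt c * c^j) / (hg (j+1) * hg (q+1-j))
        = Real.Gamma ((q:ℝ)+2) / (hg (j+1) * hg (q+1-j)) * (Real.sqrt c * c^j) := by
          rw [hGq]; ring
      _ = (Real.Gamma ((q:ℝ)+1) / (hg (j+1) * hg (q-j)) +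
           Real.Gamma ((q:ℝ)+1) / (hg j * hg (q+1-j))) * (Real.sqrt c * c^j) := by rw [hp]
      _ = _ := by ring
  rw [step1, Finset.sum_add_distrib, Finset.sum_range_succ, Finset.sum_range_succ']
  have e1 : Real.Gamma ((q:ℝ)+1) * (Real.sqrt c * c^q) / (hg (q+1) * hg (q-q)) =
      bb q * (Real.sqrt c * c^q) := by
    rw [Nat.sub_self, hg_zero, bb]; ring
  have e2 : Real.Gamma ((q:ℝ)+1) * (Real.sqrt c * c^(0:ℕ)) / (hg 0 * hg (q+1-0)) =
      bb q * Real.sqrt c := by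
    rw [hg_zero, bb]; norm_num; ring
  have e3 : ∑ j ∈ Finset.range q, Real.Gamma ((q:ℝ)+1) * (Real.sqrt c * c^(j+1)) /
      (hg (j+1) * hg (q+1-(j+1))) = c * O c q := by
    rw [O, Finset.mul_sum]
    apply Finset.sum_congr rfl
    intro j hj
    have h : q+1-(j+1) = q - j := by omega
    rw [h]
    ring
  rw [e1, e2, e3, O]
  ring

/-- partial sums S -/
noncomputable def S (c : ℝ) (q : ℕ) : ℝ :=
  ∑ m ∈ Finset.range q, bb m * (Real.sqrt c * (1 + c^m)) / (1+c)^(m+1)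

lemma O_eq_S (c : ℝ) (hc : 0 < c) (q : ℕ) : O c q = (1+c)^q * S c q := by
  induction q with
  | zero => simp [O, S]
  | succ q ih =>
    have hc1 : ((1:ℝ)+c) ≠ 0 := by positivity
    have hc2 : ((1:ℝ)+c)^(q+1) ≠ 0 := pow_ne_zero _ hc1
    rw [O_succ, ih]
    have hS : S c (q+1) = S c q + bb q * (Real.sqrt c * (1 + c^q)) / (1+c)^(q+1) := by
      rw [S, Finset.sum_range_succ, ← S]
    rw [hS]
    field_simp
    ring


lemma geom_bound {r : ℝ} (h0 : 0 ≤ r) (h1 : r < 1) (n : ℕ) :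
    ∑ i ∈ Finset.range n, r^i ≤ 1/(1-r) := by
  have h2 : (0:ℝ) < 1 - r := by linarith
  have e : ∑ i ∈ Finset.range n, r^i = (1-r^n)/(1-r) := by
    rw [geom_sum_eq (ne_of_lt h1), div_eq_div_iff (by intro h; apply h2.ne'; linarith) h2.ne']
    ring
  rw [e, div_le_div_iff₀ h2 h2]
  nlinarith [pow_nonneg h0 n]

/-- pointwise bound for the integrand -/
lemma pointwise_bound {c : ℝ} (hc : 0 < c) {v : ℝ} (hv : v ∈ Set.Icc (0:ℝ) 1) (q : ℕ) :
    ∑ m ∈ Finset.range q, (1 - v^2)^m * (Real.sqrt c * (1 + c^m) / (1+c)^(m+1)) ≤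
      Real.sqrt c * (1/(c+v^2) + 1/(1+c*v^2)) := by
  have hv0 := hv.1
  have hv1 := hv.2
  have hy0 : (0:ℝ) ≤ 1 - v^2 := by nlinarith
  have hy1 : 1 - v^2 ≤ 1 := by nlinarith
  have hc1 : (0:ℝ) < 1 + c := by linarith
  have hr1 : (0:ℝ) ≤ (1-v^2)/(1+c) := by positivity
  have hr1' : (1-v^2)/(1+c) < 1 := by
    rw [div_lt_one hc1]; linarith
  have hr2 : (0:ℝ) ≤ c*(1-v^2)/(1+c) := by positivity
  have hr2' : c*(1-v^2)/(1+c) < 1 := by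
    rw [div_lt_one hc1]; nlinarith
  have key : ∀ m ∈ Finset.range q, (1 - v^2)^m * (Real.sqrt c * (1 + c^m) / (1+c)^(m+1)) =
      Real.sqrt c/(1+c) * (((1-v^2)/(1+c))^m + (c*(1-v^2)/(1+c))^m) := by
    intro m _
    rw [div_pow, div_pow, mul_pow]
    field_simp
    ring
  rw [Finset.sum_congr rfl key, ← Finset.mul_sum, Finset.sum_add_distrib]
  have g1 := geom_bound hr1 hr1' q
  have g2 := geom_bound hr2 hr2' q
  have e1 : 1/(1-(1-v^2)/(1+c)) = (1+c)/(c+v^2) := by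
    rw [show 1-(1-v^2)/(1+c) = (c+v^2)/(1+c) by field_simp; ring]
    rw [one_div_div]
  have e2 : 1/(1-c*(1-v^2)/(1+c)) = (1+c)/(1+c*v^2) := by
    rw [show 1-c*(1-v^2)/(1+c) = (1+c*v^2)/(1+c) by field_simp; ring]

    rw [one_div_div]
  have hsc : (0:ℝ) ≤ Real.sqrt c / (1+c) := by positivity
  calc Real.sqrt c/(1+c) * (∑ i ∈ Finset.range q, ((1-v^2)/(1+c))^i +
        ∑ i ∈ Finset.range q, (c*(1-v^2)/(1+c))^i)
      ≤ Real.sqrt c/(1+c) * ((1+c)/(c+v^2) + (1+c)/(1+c*v^2)) := by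
        apply mul_le_mul_of_nonneg_left _ hsc
        rw [← e1, ← e2]
        exact add_le_add g1 g2
    _ = Real.sqrt c * (1/(c+v^2) + 1/(1+c*v^2)) := by
        have h1 : c+v^2 ≠ 0 := by positivity
        have h2 : 1+c*v^2 ≠ 0 := by positivity
        field_simp


lemma cont_rhs {c : ℝ} (hc : 0 < c) :
    Continuous (fun v : ℝ => Real.sqrt c * (1/(c+v^2) + 1/(1+c*v^2))) := by
  apply Continuous.mul continuous_const
  apply Continuous.add
  · exact Continuous.div continuous_const (by continuity) (fun v => by positivity)
  · exact Continuous.div continuous_const (by continuity) (fun v => by positivity)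

lemma integral_eval' {s : ℝ} (hs : 0 < s) :
    ∫ v in (0:ℝ)..1, s * (1/(s^2+v^2) + 1/(1+s^2*v^2)) = π/2 := by
  have hd : ∀ v ∈ Set.uIcc (0:ℝ) 1, HasDerivAt
      (fun v : ℝ => Real.arctan (v / s) + Real.arctan (s * v))
      (s * (1/(s^2+v^2) + 1/(1+s^2*v^2))) v := by
    intro v _
    have h1 : HasDerivAt (fun v : ℝ => v / s) (1 / s) v := by
      simpa using (hasDerivAt_id v).div_const s
    have h2 : HasDerivAt (fun v : ℝ => s * v) s v := by
      simpa using (hasDerivAt_id v).const_mul s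
    have a1 := (Real.hasDerivAt_arctan (v / s)).comp v h1
    have a2 := (Real.hasDerivAt_arctan (s * v)).comp v h2
    have hsum := a1.add a2
    refine hsum.congr_deriv ?_
    have hs' : s ≠ 0 := hs.ne'
    have hne : s^2 + v^2 ≠ 0 := by positivity
    have hne2 : 1 + s^2*v^2 ≠ 0 := by positivity
    have h3 : 1 + (v/s)^2 ≠ 0 := by positivity
    have h4 : 1 + (s*v)^2 ≠ 0 := by positivity
    field_simp
  have hcont : Continuous (fun v : ℝ => s * (1/(s^2+v^2) + 1/(1+s^2*v^2))) := by
    apply Continuous.mul continuous_const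
    apply Continuous.add
    · exact Continuous.div continuous_const (by continuity) (fun v => by positivity)
    · exact Continuous.div continuous_const (by continuity) (fun v => by positivity)
  rw [intervalIntegral.integral_eq_sub_of_hasDerivAt hd (hcont.intervalIntegrable 0 1)]
  have harc : Real.arctan (1 / s) = π/2 - Real.arctan s := by
    rw [one_div]
    exact Real.arctan_inv_of_pos hs
  simp only [zero_div, mul_zero, Real.arctan_zero, add_zero, mul_one, sub_zero]
  rw [harc]
  ring

lemma integral_eval {c : ℝ} (hc : 0 < c) :
    ∫ v in (0:ℝ)..1, Real.sqrt c * (1/(c+v^2) + 1/(1+c*v^2)) = π/2 := by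
  have hsc : (0:ℝ) < Real.sqrt c := Real.sqrt_pos.mpr hc
  have hss : Real.sqrt c ^ 2 = c := Real.sq_sqrt hc.le
  have := integral_eval' hsc
  rw [hss] at this
  exact this

lemma S_le_one {c : ℝ} (hc : 0 < c) (q : ℕ) : S c q ≤ 1 := by
  have hc1 : (0:ℝ) < 1 + c := by linarith
  have hint : ∀ m : ℕ, IntervalIntegrable
      (fun v : ℝ => (1 - v^2)^m * (Real.sqrt c * (1 + c^m) / (1+c)^(m+1)))
      MeasureTheory.volume 0 1 := fun m => (Continuous.intervalIntegrable (by continuity) 0 1)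
  have hrep : S c q = 2/π * ∫ v in (0:ℝ)..1,
      ∑ m ∈ Finset.range q, (1 - v^2)^m * (Real.sqrt c * (1 + c^m) / (1+c)^(m+1)) := by
    rw [intervalIntegral.integral_finset_sum (fun m _ => hint m), S, Finset.mul_sum]
    apply Finset.sum_congr rfl
    intro m _
    rw [bb_eq_W, intervalIntegral.integral_mul_const, ← W]
    ring
  rw [hrep]
  have hmono : (∫ v in (0:ℝ)..1,
      ∑ m ∈ Finset.range q, (1 - v^2)^m * (Real.sqrt c * (1 + c^m) / (1+c)^(m+1))) ≤
      ∫ v in (0:ℝ)..1, Real.sqrt c * (1/(c+v^2) + 1/(1+c*v^2)) := by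
    have hcs : Continuous (fun v : ℝ =>
        ∑ m ∈ Finset.range q, (1 - v^2)^m * (Real.sqrt c * (1 + c^m) / (1+c)^(m+1))) :=
      continuous_finset_sum _ (fun m _ => by continuity)
    exact intervalIntegral.integral_mono_on (by norm_num)
      (hcs.intervalIntegrable 0 1) ((cont_rhs hc).intervalIntegrable 0 1)
      (fun v hv => pointwise_bound hc hv q)
  rw [integral_eval hc] at hmono
  have hπ : (0:ℝ) < π := Real.pi_pos
  calc 2/π * ∫ v in (0:ℝ)..1,
      ∑ m ∈ Finset.range q, (1 - v^2)^m * (Real.sqrt c * (1 + c^m) / (1+c)^(m+1))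
      ≤ 2/π * (π/2) := by
        apply mul_le_mul_of_nonneg_left hmono (by positivity)
    _ = 1 := by field_simp


lemma even_sum (q : ℕ) (c : ℝ) (hc : 0 < c) :
    ∑ k ∈ (Finset.range (2*q+1)).filter (fun k => Even k),
        Real.Gamma ((q : ℝ) + 1) * c ^ ((k : ℝ) / 2) /
          (Real.Gamma ((k : ℝ) / 2 + 1) * Real.Gamma ((q : ℝ) - (k : ℝ) / 2 + 1))
      = (1+c)^q := by
  have himg : (Finset.range (2*q+1)).filter (fun k => Even k) =
      (Finset.range (q+1)).image (fun j => 2*j) := by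
    ext k
    simp only [Finset.mem_filter, Finset.mem_range, Finset.mem_image]
    constructor
    · rintro ⟨hk, j, rfl⟩
      exact ⟨j, by omega, by omega⟩
    · rintro ⟨j, hj, rfl⟩
      exact ⟨by omega, ⟨j, by omega⟩⟩
  rw [himg, Finset.sum_image (by intros a _ b _ h; simp only at h; omega)]
  have hterm : ∀ j ∈ Finset.range (q+1),
      Real.Gamma ((q : ℝ) + 1) * c ^ (((2*j : ℕ) : ℝ) / 2) /
        (Real.Gamma (((2*j : ℕ) : ℝ) / 2 + 1) * Real.Gamma ((q : ℝ) - ((2*j : ℕ) : ℝ) / 2 + 1))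
      = (q.choose j : ℝ) * c ^ j := by
    intro j hj
    have hj' : j ≤ q := by simpa [Nat.lt_succ_iff] using Finset.mem_range.mp hj
    have e0 : ((2*j : ℕ) : ℝ) / 2 = ((j : ℕ) : ℝ) := by push_cast; ring
    rw [e0, Real.rpow_natCast]
    have e1 : (q : ℝ) - (j : ℝ) + 1 = (((q - j : ℕ)) : ℝ) + 1 := by
      push_cast [Nat.cast_sub hj']; ring
    rw [e1, Real.Gamma_nat_eq_factorial, Real.Gamma_nat_eq_factorial,
      Real.Gamma_nat_eq_factorial, Nat.cast_choose ℝ hj']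
    have hj0 : (j.factorial : ℝ) ≠ 0 := by positivity
    have hqj0 : ((q-j).factorial : ℝ) ≠ 0 := by positivity
    field_simp
  rw [Finset.sum_congr rfl hterm]
  rw [show (1+c) = (c+1) by ring, add_pow]
  apply Finset.sum_congr rfl
  intro j _
  rw [one_pow]
  ring

lemma odd_sum (q : ℕ) (c : ℝ) (hc : 0 < c) :
    ∑ k ∈ (Finset.range (2*q)).filter (fun k => Odd k),
        Real.Gamma ((q : ℝ) + 1) * c ^ ((k : ℝ) / 2) /
          (Real.Gamma ((k : ℝ) / 2 + 1) * Real.Gamma ((q : ℝ) - (k : ℝ) / 2 + 1))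
      = O c q := by
  have himg : (Finset.range (2*q)).filter (fun k => Odd k) =
      (Finset.range q).image (fun j => 2*j+1) := by
    ext k
    simp only [Finset.mem_filter, Finset.mem_range, Finset.mem_image]
    constructor
    · rintro ⟨hk, j, rfl⟩
      exact ⟨j, by omega, by omega⟩
    · rintro ⟨j, hj, rfl⟩
      exact ⟨by omega, ⟨j, by omega⟩⟩
  rw [himg, Finset.sum_image (by intros a _ b _ h; simp only at h; omega), O]
  apply Finset.sum_congr rfl
  intro j hj
  have hj' : j < q := Finset.mem_range.mp hj
  have e0 : ((2*j+1 : ℕ) : ℝ) / 2 = (j : ℝ) + (1/2 : ℝ) := by push_cast; ring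
  have ec : c ^ (((2*j+1 : ℕ) : ℝ) / 2) = Real.sqrt c * c ^ j := by
    rw [e0, Real.rpow_add hc, Real.rpow_natCast, show ((1:ℝ)/2) = (1/(2:ℝ)) from rfl,
      ← Real.sqrt_eq_rpow]
    ring
  have e1 : ((2*j+1 : ℕ) : ℝ) / 2 + 1 = (((j+1 : ℕ)) : ℝ) + 1/2 := by push_cast; ring
  have e2 : (q : ℝ) - ((2*j+1 : ℕ) : ℝ) / 2 + 1 = (((q - j : ℕ)) : ℝ) + 1/2 := by
    push_cast [Nat.cast_sub hj'.le]; ring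
  rw [ec, e1, e2]
  rfl


/-- Even-index terms of the half-binomial sum dominate the odd-index terms. -/
theorem half_binomial_even_ge_odd (q : ℕ) (hq : 0 < q) (c : ℝ) (hc0 : 0 < c) (hc1 : c < 1) :
    ∑ k ∈ (Finset.range (2 * q + 1)).filter (fun k => Even k),
        Real.Gamma ((q : ℝ) + 1) * c ^ ((k : ℝ) / 2) /
          (Real.Gamma ((k : ℝ) / 2 + 1) * Real.Gamma ((q : ℝ) - (k : ℝ) / 2 + 1)) ≥
      ∑ k ∈ (Finset.range (2 * q)).filter (fun k => Odd k),
        Real.Gamma ((q : ℝ) + 1) * c ^ ((k : ℝ) / 2) /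
          (Real.Gamma ((k : ℝ) / 2 + 1) * Real.Gamma ((q : ℝ) - (k : ℝ) / 2 + 1)) := by
  rw [ge_iff_le, odd_sum q c hc0, even_sum q c hc0, O_eq_S c hc0 q]
  have hS := S_le_one hc0 q
  have hpow : (0:ℝ) ≤ (1+c)^q := by positivity
  calc (1+c)^q * S c q ≤ (1+c)^q * 1 := by
        exact mul_le_mul_of_nonneg_left hS hpow
    _ = (1+c)^q := by ring
end

section
/- Gautschi's inequality: for real x > 0 and s ∈ (0,1), x^{1−s} < Γ(x+1)/Γ(x+s) < (x+1)^{1−s}. -/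
open Real

private lemma logGamma_convex {a b t : ℝ} (ha : 0 < a) (hb : 0 < b)
    (ht0 : 0 ≤ t) (ht1 : t ≤ 1) :
    Real.log (Real.Gamma ((1 - t) * a + t * b)) ≤
      (1 - t) * Real.log (Real.Gamma a) + t * Real.log (Real.Gamma b) := by
  have h := Real.convexOn_log_Gamma.2
    (Set.mem_Ioi.mpr ha) (Set.mem_Ioi.mpr hb)
    (show (0:ℝ) ≤ 1 - t by linarith) ht0 (show 1 - t + t = 1 by ring)
  simpa [smul_eq_mul] using h

/-- Non-strict lower Gautschi: Γ(y+1)/Γ(y+s) ≥ y^(1-s). -/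
private lemma gautschi_low {y s : ℝ} (hy : 0 < y) (hs0 : 0 < s) (hs1 : s < 1) :
    y ^ (1 - s) ≤ Real.Gamma (y + 1) / Real.Gamma (y + s) := by
  have hGy := Real.Gamma_pos_of_pos hy
  have hGys := Real.Gamma_pos_of_pos (by linarith : (0:ℝ) < y + s)
  have hc : Real.log (Real.Gamma (y + s)) ≤
      Real.log (Real.Gamma y) + s * Real.log y := by
    have h := logGamma_convex (a := y) (b := y + 1) (t := s) hy (by linarith) hs0.le hs1.le
    rw [show (1 - s) * y + s * (y + 1) = y + s by ring,
      Real.Gamma_add_one hy.ne', Real.log_mul hy.ne' hGy.ne'] at h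
    have e : (1 - s) * Real.log (Real.Gamma y)
        + s * (Real.log y + Real.log (Real.Gamma y))
        = Real.log (Real.Gamma y) + s * Real.log y := by ring
    linarith
  rw [Real.Gamma_add_one hy.ne']
  rw [← Real.exp_log (div_pos (mul_pos hy hGy) hGys),
    Real.log_div (mul_pos hy hGy).ne' hGys.ne', Real.log_mul hy.ne' hGy.ne',
    ← Real.exp_log (Real.rpow_pos_of_pos hy (1 - s)), Real.log_rpow hy]
  apply Real.exp_le_exp.mpr
  have e : (1 - s) * Real.log y = Real.log y - s * Real.log y := by ring
  linarith

/-- Gautschi's inequality for the ratio of Gamma functions. -/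
theorem gautschi_inequality (x s : ℝ) (hx : 0 < x) (hs0 : 0 < s) (hs1 : s < 1) :
    x ^ (1 - s) < Real.Gamma (x + 1) / Real.Gamma (x + s) ∧
      Real.Gamma (x + 1) / Real.Gamma (x + s) < (x + 1) ^ (1 - s) := by
  have hxs : (0:ℝ) < x + s := by linarith
  have hx1 : (0:ℝ) < x + 1 := by linarith
  have hGx1 := Real.Gamma_pos_of_pos hx1
  have hGxs := Real.Gamma_pos_of_pos hxs
  constructor
  · -- lower bound, strict
    have hrec : Real.Gamma (x + 1) / Real.Gamma (x + s) =
        (Real.Gamma (x + 1 + 1) / Real.Gamma (x + 1 + s)) * ((x + s) / (x + 1)) := by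
      rw [Real.Gamma_add_one hx1.ne', show x + 1 + s = (x + s) + 1 by ring,
        Real.Gamma_add_one hxs.ne']
      field_simp
    have hlow := gautschi_low hx1 hs0 hs1
    have h1 : (x + 1) ^ (1 - s) * ((x + s) / (x + 1)) ≤
        Real.Gamma (x + 1) / Real.Gamma (x + s) := by
      rw [hrec]
      exact mul_le_mul_of_nonneg_right hlow (by positivity)
    refine lt_of_lt_of_le ?_ h1
    have hamgm : (1 - s) * Real.log x + s * Real.log (x + 1) < Real.log (x + s) := by
      have h := strictConcaveOn_log_Ioi.2
        (Set.mem_Ioi.mpr hx) (Set.mem_Ioi.mpr hx1) (show x ≠ x + 1 by linarith)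
        (show (0:ℝ) < 1 - s by linarith) hs0 (show 1 - s + s = 1 by ring)
      rw [smul_eq_mul, smul_eq_mul, smul_eq_mul, smul_eq_mul,
        show (1 - s) * x + s * (x + 1) = x + s by ring] at h
      exact h
    have hrw : (x + 1) ^ (1 - s) * ((x + s) / (x + 1)) =
        Real.exp (Real.log (x + s) - s * Real.log (x + 1)) := by
      rw [Real.exp_sub, Real.exp_log hxs, ← Real.log_rpow hx1,
        Real.exp_log (Real.rpow_pos_of_pos hx1 _)]
      rw [show (1:ℝ) - s = 1 + (-s) by ring, Real.rpow_add hx1, Real.rpow_one,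
        Real.rpow_neg hx1.le]
      field_simp
    rw [hrw, show x ^ (1 - s) = Real.exp ((1 - s) * Real.log x) by
      rw [← Real.log_rpow hx, Real.exp_log (Real.rpow_pos_of_pos hx _)]]
    apply Real.exp_lt_exp.mpr
    linarith
  · -- upper bound
    have hc : Real.log (Real.Gamma (x + 1)) ≤
        Real.log (Real.Gamma (x + s)) + (1 - s) * Real.log (x + s) := by
      have h := logGamma_convex (a := x + s) (b := x + s + 1) (t := 1 - s)
        hxs (by linarith) (by linarith) (by linarith)
      rw [show (1 - (1 - s)) * (x + s) + (1 - s) * (x + s + 1) = x + 1 by ring,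
        Real.Gamma_add_one hxs.ne', Real.log_mul hxs.ne' hGxs.ne'] at h
      have e : (1 - (1 - s)) * Real.log (Real.Gamma (x + s))
          + (1 - s) * (Real.log (x + s) + Real.log (Real.Gamma (x + s)))
          = Real.log (Real.Gamma (x + s)) + (1 - s) * Real.log (x + s) := by ring
      linarith
    have h2 : Real.Gamma (x + 1) / Real.Gamma (x + s) ≤ (x + s) ^ (1 - s) := by
      rw [← Real.exp_log (div_pos hGx1 hGxs), Real.log_div hGx1.ne' hGxs.ne',
        ← Real.exp_log (Real.rpow_pos_of_pos hxs (1 - s)), Real.log_rpow hxs]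
      apply Real.exp_le_exp.mpr
      linarith
    exact lt_of_le_of_lt h2 (Real.rpow_lt_rpow hxs.le (by linarith) (by linarith))
end

section
/- Gauss' summation formula: for complex (or real) parameters a, b, c with c not a nonpositive integer and Re(c − a − b) > 0, the Gaussian hypergeometric series ₂F₁(a, b; c; 1) = Σ_{r=0}^∞ (a)_r (b)_r / ((c)_r r!) converges and equals Γ(c)Γ(c−a−b)/(Γ(c−a)Γ(c−b)). -/
open Complex

namespace GaussAux
open Complex Filter Finset Topology
noncomputable def P (x : ℂ) (r : ℕ) : ℂ := ∏ i ∈ Finset.range r, (x + i)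
lemma P_zero (x : ℂ) : P x 0 = 1 := by simp [P]
lemma P_succ (x : ℂ) (r : ℕ) : P x (r + 1) = P x r * (x + r) := by
  simp [P, Finset.prod_range_succ]
lemma P_eq (x : ℂ) (r : ℕ) : (ascPochhammer ℂ r).eval x = P x r := by
  induction r with
  | zero => simp [P_zero]
  | succ n ih => rw [ascPochhammer_succ_eval, ih, P_succ]
lemma P_ne_zero {c : ℂ} (hc : ∀ m : ℕ, c ≠ -(m : ℂ)) (r : ℕ) : P c r ≠ 0 := by
  rw [P]
  refine Finset.prod_ne_zero_iff.2 fun i _ => ?_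
  intro h
  exact hc i (by linear_combination h)
lemma P_one (r : ℕ) : P 1 r = (r.factorial : ℂ) := by
  induction r with
  | zero => simp [P_zero]
  | succ n ih => rw [P_succ, ih, Nat.factorial_succ]; push_cast; ring
lemma one_ne_neg_nat : ∀ m : ℕ, (1:ℂ) ≠ -(m:ℂ) := by
  intro m h
  have := congrArg Complex.re h
  simp at this
  linarith [Nat.cast_nonneg (α := ℝ) m]
lemma P_shift (c : ℂ) (r : ℕ) : c * P (c + 1) r = P c r * (c + r) := by
  have : P c (r+1) = P (c+1) r * c := by
    rw [P, Finset.prod_range_succ']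
    simp only [Nat.cast_zero, add_zero, P]
    congr 1
    exact Finset.prod_congr rfl fun i _ => by push_cast; ring
  rw [← P_succ, this]; ring
lemma GammaSeq_eq (z : ℂ) (n : ℕ) :
    Complex.GammaSeq z n = (n:ℂ)^z * n.factorial / P z (n+1) := rfl
noncomputable def A (a b c : ℂ) (r : ℕ) : ℂ := P a r * P b r / (P c r * r.factorial)
lemma A_zero (a b c : ℂ) : A a b c 0 = 1 := by simp [A, P_zero]
lemma P_neg_nat_eq_zero (m : ℕ) {r : ℕ} (h : m < r) : P (-(m:ℂ)) r = 0 := by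
  rw [P]
  exact Finset.prod_eq_zero (Finset.mem_range.2 h) (by push_cast; ring)

lemma A_succ_eq (a b c : ℂ) (ha : ∀ m : ℕ, a ≠ -(m:ℂ)) (hb : ∀ m : ℕ, b ≠ -(m:ℂ))
    (hc : ∀ m : ℕ, c ≠ -(m:ℂ)) (n : ℕ) (hn : n ≠ 0) :
    A a b c (n + 1) = (n:ℂ)^(a+b-c-1) *
      (GammaSeq c n * GammaSeq 1 n / (GammaSeq a n * GammaSeq b n)) := by
  have hN : (n:ℂ) ≠ 0 := Nat.cast_ne_zero.2 hn
  have hPa := P_ne_zero ha (n+1)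
  have hPb := P_ne_zero hb (n+1)
  have hPc := P_ne_zero hc (n+1)
  have hP1 := P_ne_zero one_ne_neg_nat (n+1)
  have hF : ((n+1).factorial : ℂ) ≠ 0 := Nat.cast_ne_zero.2 (Nat.factorial_ne_zero _)
  have hf : (n.factorial : ℂ) ≠ 0 := Nat.cast_ne_zero.2 (Nat.factorial_ne_zero _)
  have key : (n:ℂ)^(a+b-c-1) * ((n:ℂ)^c * (n:ℂ)^(1:ℂ)) = (n:ℂ)^a * (n:ℂ)^b := by
    rw [← cpow_add _ _ hN, ← cpow_add _ _ hN, ← cpow_add _ _ hN]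
    congr 1
    ring
  rw [A, GammaSeq_eq, GammaSeq_eq, GammaSeq_eq, GammaSeq_eq, div_mul_div_comm,
    div_mul_div_comm, div_div_div_eq, mul_div_assoc']
  rw [div_eq_div_iff (mul_ne_zero hPc hF) (mul_ne_zero (mul_ne_zero hPc hP1)
    (mul_ne_zero (mul_ne_zero (fun h => hN (cpow_eq_zero_iff _ _ |>.1 h).1) hf)
      (mul_ne_zero (fun h => hN (cpow_eq_zero_iff _ _ |>.1 h).1) hf))), P_one]
  linear_combination (-(1:ℂ)) * (P a (n+1) * P b (n+1) * P c (n+1) * ((n+1).factorial : ℂ)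
    * (n.factorial:ℂ)^2) * key

lemma summable_and_decay (a b c : ℂ) (hc : ∀ m : ℕ, c ≠ -(m:ℂ))
    (hre : 0 < (c - a - b).re) :
    Summable (fun n => ‖A a b c n‖) ∧
      Tendsto (fun n : ℕ => (n:ℂ) * A a b c n) atTop (𝓝 0) := by
  by_cases hab : ∃ m : ℕ, a = -(m:ℂ) ∨ b = -(m:ℂ)
  · obtain ⟨m, hm⟩ := hab
    have hz : ∀ r : ℕ, m < r → A a b c r = 0 := by
      intro r hr
      rcases hm with h | h <;> rw [A, h, P_neg_nat_eq_zero m hr] <;> ring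
    constructor
    · apply summable_of_ne_finset_zero (s := Finset.range (m+1))
      intro n hn
      rw [hz n (by simpa using hn), norm_zero]
    · apply Tendsto.congr' _ tendsto_const_nhds
      filter_upwards [eventually_gt_atTop m] with n hn
      rw [hz n hn, mul_zero]
  · push_neg at hab
    have ha : ∀ m : ℕ, a ≠ -(m:ℂ) := fun m => (hab m).1
    have hb : ∀ m : ℕ, b ≠ -(m:ℂ) := fun m => (hab m).2
    set L : ℂ := Gamma c * Gamma 1 / (Gamma a * Gamma b) with hL
    have hlim : Tendsto (fun n => GammaSeq c n * GammaSeq 1 n /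
        (GammaSeq a n * GammaSeq b n)) atTop (𝓝 L) :=
      ((GammaSeq_tendsto_Gamma c).mul (GammaSeq_tendsto_Gamma 1)).div
        ((GammaSeq_tendsto_Gamma a).mul (GammaSeq_tendsto_Gamma b))
        (mul_ne_zero (Complex.Gamma_ne_zero ha) (Complex.Gamma_ne_zero hb))
    set δ : ℝ := (c - a - b).re with hδ
    have hrexp : (a + b - c - 1).re = -δ - 1 := by simp [hδ]; ring
    have hbound : ∀ᶠ n : ℕ in atTop, ‖A a b c (n+1)‖ ≤ (‖L‖+1) * (n:ℝ)^(-δ-1) := by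
      have hnorm : Tendsto (fun n => ‖GammaSeq c n * GammaSeq 1 n /
          (GammaSeq a n * GammaSeq b n)‖) atTop (𝓝 ‖L‖) := hlim.norm
      filter_upwards [hnorm.eventually (eventually_le_nhds (by linarith : ‖L‖ < ‖L‖+1)),
        eventually_ge_atTop 1] with n hn hn1
      rw [A_succ_eq a b c ha hb hc n (by omega), norm_mul,
        norm_natCast_cpow_of_pos (by omega), hrexp]
      calc (n:ℝ)^(-δ-1) * ‖_‖ ≤ (n:ℝ)^(-δ-1) * (‖L‖+1) := by
            apply mul_le_mul_of_nonneg_left hn (Real.rpow_nonneg (Nat.cast_nonneg n) _)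
        _ = (‖L‖+1) * (n:ℝ)^(-δ-1) := by ring
    have hgsum : Summable (fun n : ℕ => (‖L‖+1) * (n:ℝ)^(-δ-1)) :=
      (Real.summable_nat_rpow.2 (by linarith)).mul_left _
    constructor
    · rw [← summable_nat_add_iff 1]
      apply Summable.of_norm_bounded_eventually_nat hgsum
      filter_upwards [hbound] with n hn
      rwa [norm_norm]
    · rw [← tendsto_add_atTop_iff_nat 1]
      rw [tendsto_zero_iff_norm_tendsto_zero]
      have hg0 : Tendsto (fun n : ℕ => 2*(‖L‖+1) * (n:ℝ)^(-δ)) atTop (𝓝 0) := by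
        rw [show (0:ℝ) = 2*(‖L‖+1) * 0 by ring]
        exact (((tendsto_rpow_neg_atTop hre).comp tendsto_natCast_atTop_atTop)).const_mul _
      apply squeeze_zero' (Eventually.of_forall fun n => norm_nonneg _) _ hg0
      filter_upwards [hbound, eventually_ge_atTop 1] with n hn hn1
      have hnn : (0:ℝ) < (n:ℝ) := by exact_mod_cast hn1
      rw [norm_mul]
      calc ‖((n+1:ℕ):ℂ)‖ * ‖A a b c (n+1)‖
          ≤ (2*(n:ℝ)) * ((‖L‖+1) * (n:ℝ)^(-δ-1)) := by
            apply mul_le_mul _ hn (norm_nonneg _) (by positivity)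
            · rw [Complex.norm_natCast]
              push_cast
              have : (1:ℝ) ≤ (n:ℝ) := by exact_mod_cast hn1
              linarith
        _ = 2*(‖L‖+1) * ((n:ℝ) * (n:ℝ)^(-δ-1)) := by ring
        _ = 2*(‖L‖+1) * (n:ℝ)^(-δ) := by
            rw [show (n:ℝ) * (n:ℝ)^(-δ-1) = (n:ℝ)^(1:ℝ) * (n:ℝ)^(-δ-1) by rw [Real.rpow_one],
              ← Real.rpow_add hnn]
            norm_num

variable {a b c : ℂ}

lemma hc_succ (hc : ∀ m : ℕ, c ≠ -(m:ℂ)) : ∀ m : ℕ, c + 1 ≠ -(m:ℂ) := by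
  intro m h
  apply hc (m+1)
  push_cast
  linear_combination h

lemma hc_add (hc : ∀ m : ℕ, c ≠ -(m:ℂ)) (k : ℕ) : ∀ m : ℕ, c + k ≠ -(m:ℂ) := by
  intro m h
  apply hc (m+k)
  push_cast
  linear_combination h

lemma hc_add_ne (hc : ∀ m : ℕ, c ≠ -(m:ℂ)) (r : ℕ) : c + (r:ℂ) ≠ 0 := by
  intro h
  exact hc r (by linear_combination h)

lemma A_rec (hc : ∀ m : ℕ, c ≠ -(m:ℂ)) (r : ℕ) :
    A a b c (r+1) = A a b c r * ((a+r)*(b+r)) / ((c+r)*(r+1)) := by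
  have hPc := P_ne_zero hc r
  have hcr := hc_add_ne hc r
  have hf : (r.factorial : ℂ) ≠ 0 := Nat.cast_ne_zero.2 (Nat.factorial_ne_zero _)
  have hr1 : ((r:ℂ)+1) ≠ 0 := by
    intro h
    have := congrArg Complex.re h
    simp at this
    linarith [Nat.cast_nonneg (α := ℝ) r]
  rw [A, A, P_succ, P_succ, P_succ, Nat.factorial_succ]
  push_cast
  field_simp

lemma A_shiftc (hc : ∀ m : ℕ, c ≠ -(m:ℂ)) (r : ℕ) :
    A a b (c+1) r = A a b c r * c / (c + r) := by
  have hPc := P_ne_zero hc r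
  have hPc1 := P_ne_zero (hc_succ hc) r
  have hcr := hc_add_ne hc r
  have hc0 : c ≠ 0 := by simpa using hc 0
  have hf : (r.factorial : ℂ) ≠ 0 := Nat.cast_ne_zero.2 (Nat.factorial_ne_zero _)
  rw [A, A, div_mul_eq_mul_div, div_div,
    div_eq_div_iff (mul_ne_zero hPc1 hf) (mul_ne_zero (mul_ne_zero hPc hf) hcr)]
  linear_combination (-(P a r * P b r * (r.factorial : ℂ))) * P_shift c r

lemma telescope (hc : ∀ m : ℕ, c ≠ -(m:ℂ)) (n : ℕ) :
    c*(c-a-b) * (∑ r ∈ Finset.range (n+1), A a b c r)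
      - (c-a)*(c-b) * (∑ r ∈ Finset.range (n+1), A a b (c+1) r)
      = -(c * ((n:ℂ)+1) * A a b c (n+1)) := by
  induction n with
  | zero =>
    have hc0 : c ≠ 0 := by simpa using hc 0
    simp only [zero_add, Finset.sum_range_one, Nat.cast_zero]
    rw [show (1:ℕ) = 0 + 1 from rfl, A_rec hc 0]
    simp only [A_zero, Nat.cast_zero]
    push_cast
    field_simp
    linear_combination (a*b) * (mul_inv_cancel₀ hc0)
  | succ n ih =>
    rw [Finset.sum_range_succ (f := A a b c), Finset.sum_range_succ (f := A a b (c+1))]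
    have hY := A_rec (a := a) (b := b) hc (n+1)
    have hX := A_shiftc (a := a) (b := b) hc (n+1)
    have hu := hc_add_ne hc (n+1)
    have hr2 : ((n:ℂ)+1+1) ≠ 0 := by
      intro h
      have := congrArg Complex.re h
      simp at this
      linarith [Nat.cast_nonneg (α := ℝ) n]
    push_cast at hY hX hu ⊢
    have hY' : A a b c (n+1+1) * ((c+((n:ℂ)+1))*((n:ℂ)+1+1))
        = A a b c (n+1) * ((a+((n:ℂ)+1))*(b+((n:ℂ)+1))) := by
      rw [hY]
      field_simp
    have hX' : A a b (c+1) (n+1) * (c+((n:ℂ)+1)) = A a b c (n+1) * c := by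
      rw [hX]
      field_simp
    apply mul_left_cancel₀ hu
    linear_combination (c+((n:ℂ)+1)) * ih + c * hY' + (-((c-a)*(c-b))) * hX'

variable {a b c : ℂ}

noncomputable def F (a b c : ℂ) : ℂ := ∑' r, A a b c r

lemma hasSum_F (a b : ℂ) (hc : ∀ m : ℕ, c ≠ -(m:ℂ)) (hre : 0 < (c - a - b).re) :
    HasSum (A a b c) (F a b c) :=
  (Summable.of_norm (summable_and_decay a b c hc hre).1).hasSum

lemma one_step (a b : ℂ) (hc : ∀ m : ℕ, c ≠ -(m:ℂ)) (hre : 0 < (c - a - b).re) :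
    c * (c-a-b) * F a b c = (c-a)*(c-b) * F a b (c+1) := by
  have hre1 : 0 < (c + 1 - a - b).re := by
    have : (c + 1 - a - b).re = (c - a - b).re + 1 := by simp [Complex.add_re, Complex.sub_re]; ring
    rw [this]; linarith
  have h1 := hasSum_F a b hc hre
  have h2 := hasSum_F a b (hc_succ hc) hre1
  have t1 : Tendsto (fun n => ∑ r ∈ Finset.range (n+1), A a b c r) atTop (𝓝 (F a b c)) :=
    (tendsto_add_atTop_iff_nat 1).2 h1.tendsto_sum_nat
  have t2 : Tendsto (fun n => ∑ r ∈ Finset.range (n+1), A a b (c+1) r) atTop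
      (𝓝 (F a b (c+1))) := (tendsto_add_atTop_iff_nat 1).2 h2.tendsto_sum_nat
  have d := (summable_and_decay a b c hc hre).2
  have t3 : Tendsto (fun n : ℕ => -(c * ((n:ℂ)+1) * A a b c (n+1))) atTop (𝓝 0) := by
    have d1 : Tendsto (fun n : ℕ => (((n+1:ℕ)):ℂ) * A a b c (n+1)) atTop (𝓝 0) :=
      (tendsto_add_atTop_iff_nat 1).2 d
    have : Tendsto (fun n : ℕ => -(c * ((((n+1:ℕ)):ℂ) * A a b c (n+1)))) atTop (𝓝 (-(c * 0))) :=
      (d1.const_mul c).neg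
    simp only [mul_zero, neg_zero] at this
    apply this.congr
    intro n
    push_cast
    ring
  have lim1 : Tendsto (fun n => c * (c-a-b) * (∑ r ∈ Finset.range (n+1), A a b c r)
      - (c-a)*(c-b) * (∑ r ∈ Finset.range (n+1), A a b (c+1) r)) atTop
      (𝓝 (c * (c-a-b) * F a b c - (c-a)*(c-b) * F a b (c+1))) :=
    (t1.const_mul _).sub (t2.const_mul _)
  have lim2 : Tendsto (fun n => c * (c-a-b) * (∑ r ∈ Finset.range (n+1), A a b c r)
      - (c-a)*(c-b) * (∑ r ∈ Finset.range (n+1), A a b (c+1) r)) atTop (𝓝 0) := by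
    apply t3.congr
    intro n
    exact (telescope hc n).symm
  have := tendsto_nhds_unique lim1 lim2
  linear_combination this

lemma iterate (a b : ℂ) (hc : ∀ m : ℕ, c ≠ -(m:ℂ)) (hre : 0 < (c - a - b).re) (k : ℕ) :
    P c k * P (c-a-b) k * F a b c = P (c-a) k * P (c-b) k * F a b (c + k) := by
  induction k with
  | zero => simp [P_zero]
  | succ k ih =>
    have hck : ∀ m : ℕ, c + (k:ℂ) ≠ -(m:ℂ) := hc_add hc k
    have hrek : 0 < (c + (k:ℂ) - a - b).re := by
      have : (c + (k:ℂ) - a - b).re = (c - a - b).re + k := by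
        simp [Complex.add_re, Complex.sub_re]; ring
      rw [this]
      have : (0:ℝ) ≤ k := Nat.cast_nonneg k
      linarith
    have os := one_step (c := c + (k:ℂ)) a b hck hrek
    rw [P_succ, P_succ, P_succ, P_succ,
      show c + ((k+1:ℕ):ℂ) = c + (k:ℂ) + 1 by push_cast; ring]
    linear_combination ((c+(k:ℂ))*((c-a-b)+(k:ℂ))) * ih + (P (c-a) k * P (c-b) k) * os

variable {a b c : ℂ}

lemma norm_P_factor_ge (c : ℂ) (k i : ℕ) : (k:ℝ) + i - ‖c‖ ≤ ‖c + (k:ℂ) + i‖ := by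
  have h1 : ‖((k:ℂ) + i)‖ - ‖-c‖ ≤ ‖((k:ℂ) + i) - (-c)‖ := norm_sub_norm_le _ _
  have h2 : ‖((k:ℂ) + i)‖ = (k:ℝ) + i := by
    rw [show ((k:ℂ) + (i:ℂ)) = (((k + i : ℕ)):ℂ) by push_cast; ring, Complex.norm_natCast]
    push_cast; ring
  have h3 : ((k:ℂ) + i) - (-c) = c + k + i := by ring
  rw [h3] at h1
  rw [h2, norm_neg] at h1
  exact h1

lemma F_tendsto_one (a b c : ℂ) :
    Tendsto (fun k : ℕ => F a b (c + (k:ℕ))) atTop (𝓝 1) := by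
  -- choose the real shift κ
  set M : ℕ := ⌈‖c‖ + |a.re| + |b.re|⌉₊ + 1 with hM
  set κ : ℝ := (M:ℝ) - ‖c‖ with hκ
  have hMge : ‖c‖ + |a.re| + |b.re| ≤ (M:ℝ) - 1 := by
    have := Nat.le_ceil (‖c‖ + |a.re| + |b.re|)
    push_cast [hM]
    linarith
  have hκ1 : 1 ≤ κ := by
    have h0 : (0:ℝ) ≤ ‖c‖ := norm_nonneg _
    have ha0 : (0:ℝ) ≤ |a.re| := abs_nonneg _
    have hb0 : (0:ℝ) ≤ |b.re| := abs_nonneg _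
    rw [hκ]; linarith
  have hκab : a.re + b.re < κ := by
    have := le_abs_self a.re
    have := le_abs_self b.re
    have h0 : (0:ℝ) ≤ ‖c‖ := norm_nonneg _
    rw [hκ]; linarith
  have hκc : ∀ m : ℕ, (κ:ℂ) ≠ -(m:ℂ) := by
    intro m h
    have := congrArg Complex.re h
    simp at this
    have : (0:ℝ) ≤ (m:ℝ) := Nat.cast_nonneg m
    linarith
  have hκre : 0 < ((κ:ℂ) - a - b).re := by
    simp only [Complex.sub_re, Complex.ofReal_re]
    linarith
  -- the dominating function
  have hbound_sum : Summable (fun r => ‖A a b (κ:ℂ) r‖) :=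
    (summable_and_decay a b (κ:ℂ) hκc hκre).1
  -- norm facts
  have hPκ : ∀ r, ‖P (κ:ℂ) r‖ = ∏ i ∈ Finset.range r, (κ + i) := by
    intro r
    rw [P, norm_prod]
    apply Finset.prod_congr rfl
    intro i _
    rw [show (κ:ℂ) + (i:ℕ) = ((κ + i : ℝ):ℂ) by push_cast; ring, Complex.norm_real,
      Real.norm_of_nonneg (by positivity)]
  have hnormA : ∀ z : ℂ, ∀ r, ‖A a b z r‖ = ‖P a r‖ * ‖P b r‖ / (‖P z r‖ * r.factorial) := by
    intro z r
    rw [A, norm_div, norm_mul, norm_mul, Complex.norm_natCast]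
  -- domination
  have hdom : ∀ᶠ k : ℕ in atTop, ∀ r, ‖A a b (c + (k:ℕ)) r‖ ≤ ‖A a b (κ:ℂ) r‖ := by
    filter_upwards [eventually_ge_atTop M] with k hk r
    rw [hnormA, hnormA]
    have hPle : ‖P (κ:ℂ) r‖ ≤ ‖P (c + (k:ℕ)) r‖ := by
      rw [hPκ, P, norm_prod]
      apply Finset.prod_le_prod
      · intro i _; positivity
      · intro i _
        calc κ + i ≤ (k:ℝ) + i - ‖c‖ := by
              have : (M:ℝ) ≤ (k:ℝ) := by exact_mod_cast hk
              rw [hκ]; linarith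
          _ ≤ ‖c + (k:ℂ) + i‖ := norm_P_factor_ge c k i
          _ = ‖c + (k:ℕ) + i‖ := by norm_num
    have hPκpos : 0 < ‖P (κ:ℂ) r‖ := norm_pos_iff.2 (P_ne_zero hκc r)
    have hfpos : (0:ℝ) < r.factorial := by exact_mod_cast r.factorial_pos
    apply div_le_div_of_nonneg_left (by positivity) (by positivity)
    · exact mul_le_mul_of_nonneg_right hPle (le_of_lt hfpos)
  -- pointwise limits
  have hpt : ∀ r : ℕ, Tendsto (fun k : ℕ => A a b (c + (k:ℕ)) r) atTop
      (𝓝 (if r = 0 then 1 else 0)) := by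
    intro r
    rcases Nat.eq_zero_or_pos r with hr | hr
    · subst hr
      simp only [if_pos rfl]
      exact tendsto_const_nhds.congr fun k => (A_zero a b _).symm
    · rw [if_neg (by omega)]
      rw [tendsto_zero_iff_norm_tendsto_zero]
      have hb0 : Tendsto (fun k : ℕ => (‖P a r‖ * ‖P b r‖ / r.factorial) *
          ((k:ℝ) - ‖c‖)⁻¹) atTop (𝓝 0) := by
        rw [show (0:ℝ) = (‖P a r‖ * ‖P b r‖ / r.factorial) * 0 by ring]
        apply Tendsto.const_mul
        apply Tendsto.inv_tendsto_atTop
        exact tendsto_atTop_add_const_right _ _ tendsto_natCast_atTop_atTop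
      apply squeeze_zero' (Eventually.of_forall fun k => norm_nonneg _) _ hb0
      filter_upwards [eventually_ge_atTop (⌈‖c‖⌉₊ + 1)] with k hk
      have hkc : ‖c‖ + 1 ≤ (k:ℝ) := by
        have h1 : ‖c‖ ≤ (⌈‖c‖⌉₊ : ℝ) := Nat.le_ceil _
        have h2 : ((⌈‖c‖⌉₊ + 1 : ℕ):ℝ) ≤ (k:ℝ) := by exact_mod_cast hk
        push_cast at h2
        linarith
      have hPge : (k:ℝ) - ‖c‖ ≤ ‖P (c + (k:ℕ)) r‖ := by
        rw [P, norm_prod]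
        have h0mem : 0 ∈ Finset.range r := Finset.mem_range.2 hr
        have hkpos0 : (0:ℝ) < (k:ℝ) - ‖c‖ := by linarith
        calc (k:ℝ) - ‖c‖
            = ∏ i ∈ Finset.range r, (if i = 0 then (k:ℝ) - ‖c‖ else 1) := by
              rw [Finset.prod_ite_eq' (Finset.range r) 0 (fun _ => (k:ℝ) - ‖c‖), if_pos h0mem]
          _ ≤ ∏ i ∈ Finset.range r, ‖c + (k:ℕ) + (i:ℂ)‖ := by
              apply Finset.prod_le_prod
              · intro i _
                split <;> [linarith; norm_num]
              · intro i _
                have h2 := norm_P_factor_ge c k i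
                have : (0:ℝ) ≤ (i:ℝ) := Nat.cast_nonneg i
                split <;> linarith
      rw [hnormA]
      have hkpos : (0:ℝ) < (k:ℝ) - ‖c‖ := by linarith
      have hfpos : (0:ℝ) < (r.factorial:ℝ) := by exact_mod_cast r.factorial_pos
      have hPpos : (0:ℝ) < ‖P (c + (k:ℕ)) r‖ := lt_of_lt_of_le hkpos hPge
      have hrw : ‖P a r‖ * ‖P b r‖ / (r.factorial:ℝ) * ((k:ℝ) - ‖c‖)⁻¹
          = ‖P a r‖ * ‖P b r‖ / ((r.factorial:ℝ) * ((k:ℝ) - ‖c‖)) := by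
        field_simp
      rw [hrw, div_le_div_iff₀ (by positivity) (by positivity)]
      have hx : (0:ℝ) ≤ ‖P a r‖ * ‖P b r‖ := by positivity
      nlinarith [mul_le_mul_of_nonneg_left hPge (mul_nonneg hx hfpos.le)]
  -- Tannery
  have := tendsto_tsum_of_dominated_convergence hbound_sum hpt hdom
  rw [show ∑' r : ℕ, (if r = 0 then (1:ℂ) else 0) = 1 from tsum_ite_eq 0 1] at this
  exact this

variable {a b c : ℂ}

lemma hPB_ne (hre : 0 < (c - a - b).re) : ∀ m : ℕ, c - a - b ≠ -(m:ℂ) := by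
  intro m h
  rw [h] at hre
  simp at hre
  have : (0:ℝ) ≤ (m:ℝ) := Nat.cast_nonneg m
  linarith

lemma Q_eq (hc : ∀ m : ℕ, c ≠ -(m:ℂ)) (hre : 0 < (c - a - b).re)
    (hA : ∀ m : ℕ, c - a ≠ -(m:ℂ)) (hB : ∀ m : ℕ, c - b ≠ -(m:ℂ)) (n : ℕ) (hn : n ≠ 0) :
    P (c-a) (n+1) * P (c-b) (n+1) / (P c (n+1) * P (c-a-b) (n+1))
      = GammaSeq c n * GammaSeq (c-a-b) n / (GammaSeq (c-a) n * GammaSeq (c-b) n) := by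
  have hN : (n:ℂ) ≠ 0 := Nat.cast_ne_zero.2 hn
  have hPx := P_ne_zero hA (n+1)
  have hPy := P_ne_zero hB (n+1)
  have hPc := P_ne_zero hc (n+1)
  have hPd := P_ne_zero (hPB_ne hre) (n+1)
  have hf : (n.factorial : ℂ) ≠ 0 := Nat.cast_ne_zero.2 (Nat.factorial_ne_zero _)
  have hcx : (n:ℂ)^(c-a) ≠ 0 := fun h => hN (cpow_eq_zero_iff _ _ |>.1 h).1
  have hcy : (n:ℂ)^(c-b) ≠ 0 := fun h => hN (cpow_eq_zero_iff _ _ |>.1 h).1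
  have key : (n:ℂ)^(c-a) * (n:ℂ)^(c-b) = (n:ℂ)^c * (n:ℂ)^(c-a-b) := by
    rw [← cpow_add _ _ hN, ← cpow_add _ _ hN]
    congr 1
    ring
  rw [GammaSeq_eq, GammaSeq_eq, GammaSeq_eq, GammaSeq_eq, div_mul_div_comm,
    div_mul_div_comm, div_div_div_eq]
  rw [div_eq_div_iff (mul_ne_zero hPc hPd) (mul_ne_zero (mul_ne_zero hPc hPd)
    (mul_ne_zero (mul_ne_zero hcx hf) (mul_ne_zero hcy hf)))]
  linear_combination (P (c-a) (n+1) * P (c-b) (n+1) * P c (n+1) * P (c-a-b) (n+1)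
    * (n.factorial:ℂ)^2) * key

lemma F_eq_gauss (a b c : ℂ) (hc : ∀ m : ℕ, c ≠ -(m:ℂ)) (hre : 0 < (c - a - b).re) :
    F a b c = Gamma c * Gamma (c - a - b) / (Gamma (c - a) * Gamma (c - b)) := by
  have hPd : ∀ k : ℕ, P (c-a-b) k ≠ 0 := P_ne_zero (hPB_ne hre)
  have heq : ∀ k : ℕ, F a b c
      = P (c-a) k * P (c-b) k / (P c k * P (c-a-b) k) * F a b (c + k) := by
    intro k
    have h := iterate a b hc hre k
    have h1 : P c k ≠ 0 := P_ne_zero hc k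
    rw [div_mul_eq_mul_div, eq_div_iff (mul_ne_zero h1 (hPd k))]
    linear_combination h
  by_cases hdeg : ∃ m : ℕ, c - a = -(m:ℂ) ∨ c - b = -(m:ℂ)
  · obtain ⟨m, hm⟩ := hdeg
    have hG0 : Gamma (c-a) * Gamma (c-b) = 0 := by
      rcases hm with h | h <;> rw [h, Complex.Gamma_neg_nat_eq_zero]
      · exact zero_mul _
      · exact mul_zero _
    rw [hG0, div_zero]
    have hP0 : P (c-a) (m+1) * P (c-b) (m+1) = 0 := by
      rcases hm with h | h <;> rw [h, P_neg_nat_eq_zero m (Nat.lt_succ_self m)]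
      · exact zero_mul _
      · exact mul_zero _
    rw [heq (m+1), hP0, zero_div, zero_mul]
  · push_neg at hdeg
    have hA : ∀ m : ℕ, c - a ≠ -(m:ℂ) := fun m => (hdeg m).1
    have hB : ∀ m : ℕ, c - b ≠ -(m:ℂ) := fun m => (hdeg m).2
    have hGa : Gamma (c-a) ≠ 0 := Complex.Gamma_ne_zero hA
    have hGb : Gamma (c-b) ≠ 0 := Complex.Gamma_ne_zero hB
    set G := Gamma c * Gamma (c - a - b) / (Gamma (c - a) * Gamma (c - b)) with hG
    have hlim : Tendsto (fun n => GammaSeq c n * GammaSeq (c-a-b) n /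
        (GammaSeq (c-a) n * GammaSeq (c-b) n)) atTop (𝓝 G) :=
      ((GammaSeq_tendsto_Gamma c).mul (GammaSeq_tendsto_Gamma (c-a-b))).div
        ((GammaSeq_tendsto_Gamma (c-a)).mul (GammaSeq_tendsto_Gamma (c-b)))
        (mul_ne_zero hGa hGb)
    have hQ : Tendsto (fun k : ℕ => P (c-a) k * P (c-b) k / (P c k * P (c-a-b) k))
        atTop (𝓝 G) := by
      rw [← tendsto_add_atTop_iff_nat 1]
      apply hlim.congr'
      filter_upwards [eventually_ge_atTop 1] with n hn
      exact (Q_eq hc hre hA hB n (by omega)).symm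
    have hmul := hQ.mul (F_tendsto_one a b c)
    have hconst : (fun k : ℕ => P (c-a) k * P (c-b) k / (P c k * P (c-a-b) k)
        * F a b (c + (k:ℕ))) = fun _ : ℕ => F a b c := funext fun k => (heq k).symm
    rw [hconst] at hmul
    have := tendsto_nhds_unique hmul tendsto_const_nhds
    rw [← this, mul_one]

end GaussAux

/-- Gauss' summation formula for the Gaussian hypergeometric series at `z = 1`. -/
theorem gauss_hypergeometric_sum (a b c : ℂ)
    (hc : ∀ m : ℕ, c ≠ -(m : ℂ))
    (hre : 0 < (c - a - b).re) :
    HasSum (fun r : ℕ =>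
        (ascPochhammer ℂ r).eval a * (ascPochhammer ℂ r).eval b /
          ((ascPochhammer ℂ r).eval c * (r.factorial : ℂ)))
      (Complex.Gamma c * Complex.Gamma (c - a - b) /
        (Complex.Gamma (c - a) * Complex.Gamma (c - b))) := by
  have h := GaussAux.hasSum_F a b hc hre
  rw [GaussAux.F_eq_gauss a b c hc hre] at h
  simp only [GaussAux.P_eq]; exact h
end
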